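/- Let E' be an integral domain (e.g., a field) and let λ be a nonzero element of E'. Then the polynomial λ² − 2λ(X + Y) + (Y − X)² is irreducible in E'[X, Y]. -/

import Mathlib

open Polynomial in
theorem aux_irred {E : Type*} [CommRing E] [IsDomain E] (h2 : ringChar E ≠ 2)
    (lam : E) (hl : lam ≠ 0) :
    Irreducible ((C 1 * X ^ 2 + C (-(2 * C lam + 2 * X)) * X + C ((C lam - X) ^ 2) :
      Polynomial (Polynomial E))) := by
  set L : Polynomial E := Polynomial.C lam with hL
  set q : Polynomial (Polynomial E) :=
    C 1 * X ^ 2 + C (-(2 * L + 2 * X)) * X + C ((L - X) ^ 2) with hq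
  have h16 : (16 : E) * lam ≠ 0 := by
    have h2' : (2 : E) ≠ 0 := Ring.two_ne_zero h2
    have : (16 : E) = 2 ^ 4 := by norm_num
    exact mul_ne_zero (this ▸ pow_ne_zero _ h2') hl
  have hdeg : q.natDegree = 2 := by
    apply Polynomial.natDegree_quadratic
    exact one_ne_zero
  have hq0 : q ≠ 0 := fun h => by simp [h] at hdeg
  have hmonic : q.Monic := by
    unfold Polynomial.Monic Polynomial.leadingCoeff
    rw [hdeg, hq]
    simp only [Polynomial.coeff_add, Polynomial.coeff_C_mul, Polynomial.coeff_X_pow,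
      Polynomial.coeff_C, Polynomial.coeff_X]
    norm_num
  constructor
  · intro h
    have := Polynomial.natDegree_eq_zero_of_isUnit h
    omega
  · rintro f g hfg
    have hf0 : f ≠ 0 := fun h => hq0 (by simp [hfg, h])
    have hg0 : g ≠ 0 := fun h => hq0 (by simp [hfg, h])
    have hdadd : f.natDegree + g.natDegree = 2 := by
      rw [← Polynomial.natDegree_mul hf0 hg0, ← hfg, hdeg]
    have hlead : f.leadingCoeff * g.leadingCoeff = 1 := by
      rw [← Polynomial.leadingCoeff_mul, ← hfg]; exact hmonic
    rcases Nat.lt_or_ge f.natDegree 1 with hf1 | hf1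
    · left
      have hfz : f.natDegree = 0 := by omega
      have hf' : f = Polynomial.C (f.coeff 0) := Polynomial.eq_C_of_natDegree_eq_zero hfz
      rw [hf']
      apply Polynomial.isUnit_C.mpr
      have hlf : f.leadingCoeff = f.coeff 0 := by rw [Polynomial.leadingCoeff, hfz]
      exact IsUnit.of_mul_eq_one _ (hlf ▸ hlead)
    rcases Nat.lt_or_ge g.natDegree 1 with hg1 | hg1
    · right
      have hgz : g.natDegree = 0 := by omega
      have hg' : g = Polynomial.C (g.coeff 0) := Polynomial.eq_C_of_natDegree_eq_zero hgz
      rw [hg']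
      apply Polynomial.isUnit_C.mpr
      have hlg : g.leadingCoeff = g.coeff 0 := by rw [Polynomial.leadingCoeff, hgz]
      refine IsUnit.of_mul_eq_one f.leadingCoeff ?_
      rw [← hlg, mul_comm]; exact hlead
    exfalso
    have hf2 : f.natDegree ≤ 1 := by omega
    have hg2 : g.natDegree ≤ 1 := by omega
    set a1 := f.coeff 1 with ha1
    set a0 := f.coeff 0 with ha0
    set b1 := g.coeff 1 with hb1
    set b0 := g.coeff 0 with hb0
    have hf' : f = C a1 * X + C a0 := Polynomial.eq_X_add_C_of_natDegree_le_one hf2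
    have hg' : g = C b1 * X + C b0 := Polynomial.eq_X_add_C_of_natDegree_le_one hg2
    have hprod : (C a1 * X + C a0) * (C b1 * X + C b0)
        = C (a1 * b1) * X ^ 2 + C (a1 * b0 + a0 * b1) * X + C (a0 * b0) := by
      rw [Polynomial.C_mul, Polynomial.C_add, Polynomial.C_mul, Polynomial.C_mul,
        Polynomial.C_mul]
      ring
    rw [hf', hg', hprod, hq] at hfg
    have e2 : (1 : Polynomial E) = a1 * b1 := by
      have := congrArg (fun p => Polynomial.coeff p 2) hfg
      simp only [Polynomial.coeff_add, Polynomial.coeff_C_mul, Polynomial.coeff_X_pow,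
        Polynomial.coeff_C, Polynomial.coeff_X] at this
      norm_num at this
      linear_combination this
    have e1 : -(2 * L + 2 * X) = a1 * b0 + a0 * b1 := by
      have := congrArg (fun p => Polynomial.coeff p 1) hfg
      simp only [Polynomial.coeff_add, Polynomial.coeff_C_mul, Polynomial.coeff_X_pow,
        Polynomial.coeff_C, Polynomial.coeff_X] at this
      norm_num at this
      linear_combination this
    have e0 : (L - X) ^ 2 = a0 * b0 := by
      have := congrArg (fun p => Polynomial.coeff p 0) hfg
      simp only [Polynomial.coeff_add, Polynomial.coeff_C_mul, Polynomial.coeff_X_pow,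
        Polynomial.coeff_C, Polynomial.coeff_X] at this
      norm_num at this
      linear_combination this
    set u : Polynomial E := a1 * b0 - a0 * b1 with hu
    have key : u ^ 2 = Polynomial.C (16 * lam) * Polynomial.X := by
      have h16' : Polynomial.C ((16 : E) * lam) = 16 * L := by
        rw [Polynomial.C_mul, map_ofNat, hL]
      rw [h16']
      have expand : u ^ 2 = (a1 * b0 + a0 * b1) ^ 2 - 4 * (a1 * b1) * (a0 * b0) := by
        rw [hu]; ring
      rw [expand, ← e1, ← e2, ← e0]; ring
    have hune : u ≠ 0 := by
      intro h
      rw [h] at key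
      have hz : Polynomial.C ((16:E) * lam) * Polynomial.X ≠ 0 :=
        mul_ne_zero (by simpa using h16) Polynomial.X_ne_zero
      exact hz (by rw [← key]; ring)
    have hdu : (u ^ 2).natDegree = 2 * u.natDegree := by
      rw [Polynomial.natDegree_pow]
    have hdr : (Polynomial.C ((16:E) * lam) * Polynomial.X).natDegree = 1 := by
      rw [Polynomial.natDegree_C_mul h16, Polynomial.natDegree_X]
    rw [key, hdr] at hdu
    omega

open MvPolynomial

theorem cayley_menger_poly_irreducible
    {E : Type*} [CommRing E] [IsDomain E] (h2 : ringChar E ≠ 2)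
    (lam : E) (hl : lam ≠ 0) :
    Irreducible
      ((C (lam ^ 2) - C (2 * lam) * (X 0 + X 1) + (X 1 - X 0) ^ 2 :
        MvPolynomial (Fin 2) E)) := by
  let e2 : MvPolynomial (Fin 1) E ≃+* Polynomial E :=
    (MvPolynomial.finSuccEquiv E 0).toRingEquiv.trans
      (Polynomial.mapEquiv (MvPolynomial.isEmptyAlgEquiv E (Fin 0)).toRingEquiv)
  let e : MvPolynomial (Fin 2) E ≃+* Polynomial (Polynomial E) :=
    (MvPolynomial.finSuccEquiv E 1).toRingEquiv.trans (Polynomial.mapEquiv e2)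
  have key := aux_irred h2 lam hl
  refine (MulEquiv.irreducible_iff (e : MvPolynomial (Fin 2) E ≃* Polynomial (Polynomial E))).mp ?_
  have heq : e ((C (lam ^ 2) - C (2 * lam) * (X 0 + X 1) + (X 1 - X 0) ^ 2 :
        MvPolynomial (Fin 2) E))
      = (Polynomial.C 1 * Polynomial.X ^ 2
          + Polynomial.C (-(2 * Polynomial.C lam + 2 * Polynomial.X)) * Polynomial.X
          + Polynomial.C ((Polynomial.C lam - Polynomial.X) ^ 2) :
        Polynomial (Polynomial E)) := by
    have hX0 : e (X 0) = Polynomial.X := by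
      simp [e, MvPolynomial.finSuccEquiv_X_zero]
    have hX1 : e (X 1) = Polynomial.C Polynomial.X := by
      have h1 : (1 : Fin 2) = Fin.succ 0 := rfl
      have hstep : (MvPolynomial.finSuccEquiv E 1) (X 1) = Polynomial.C (X 0) := by
        rw [h1, MvPolynomial.finSuccEquiv_X_succ]
      simp [e, e2, hstep, MvPolynomial.finSuccEquiv_X_zero,
        Polynomial.map_C, Polynomial.map_X, Polynomial.mapEquiv_apply, RingHom.comp_apply]
    have hC : ∀ a : E, e (C a) = Polynomial.C (Polynomial.C a) := by
      intro a
      have h1 : (MvPolynomial.finSuccEquiv E 1) (C a) = Polynomial.C (C a) := by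
        simp [MvPolynomial.finSuccEquiv_apply]
      have h0 : (MvPolynomial.finSuccEquiv E 0) (C a) = Polynomial.C (C a) := by
        simp [MvPolynomial.finSuccEquiv_apply]
      simp [e, e2, h1, h0, Polynomial.map_C, Polynomial.mapEquiv_apply,
        MvPolynomial.isEmptyAlgEquiv]
      exact (AddMonoidAlgebra.uniqueAlgEquiv E (Fin 0 →₀ ℕ)).commutes a
    simp only [map_add, map_sub, map_mul, map_pow, hX0, hX1, hC]
    simp only [map_neg, map_add, map_mul, map_ofNat, Polynomial.C_mul, Polynomial.C_add,
      map_one, Polynomial.C_pow, Polynomial.C_sub]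
    ring
  show Irreducible (e ((C (lam ^ 2) - C (2 * lam) * (X 0 + X 1) + (X 1 - X 0) ^ 2 :
        MvPolynomial (Fin 2) E)))
  rw [heq]
  exact key
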